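/- Let d_λ denote the Weyl dimension of the SU(n)-representation with dominant weight λ (λ₁ ≥ ... ≥ λ_{n-1} ≥ λₙ = 0), so d_λ = ∏_{1≤i<j≤n} (λ_i - λ_j + j - i)/(j-i). For every p = (p₁,...,p_{n-1}) ∈ ℤ^{n-1} with p₁ ≥ ... ≥ p_{n-1}, there exist constants c_n, d_n > 0 depending only on n such that c_n(∑|p_i| + 1)^{n-1} ≤ inf{ d_λ : λ dominant, ∃ t₁,...,tₙ ≥ 0 integers with ∑t_i = ∑λ_i and t_i - tₙ = p_i for 1 ≤ i ≤ n-1, realizable as the content of a semistandard tableau of shape λ } ≤ d_n(∑|p_i|+1)^{n-1}, with c_n = 1/(n^{2(n-1)} 2^{n-2} ∏_{1≤i<j≤n}(j-i)) and d_n = (n+1)^{n-1}/(n-1)!. -/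

import Mathlib

open Finset

/-- The Weyl dimension of the irreducible `SU(n)`-representation with dominant
weight `λ` (given by row lengths `lam : Fin n → ℕ`):
`d_λ = ∏_{1 ≤ i < j ≤ n} (λ_i - λ_j + j - i)/(j - i)`. -/
noncomputable def suDim (n : ℕ) (lam : Fin n → ℕ) : ℝ :=
  ∏ q ∈ univ.filter (fun q : Fin n × Fin n => q.1 < q.2),
    (((lam q.1 : ℤ) - (lam q.2 : ℤ) + ((q.2 : ℕ) : ℤ) - ((q.1 : ℕ) : ℤ) : ℤ) : ℝ) /
      (((q.2 : ℕ) - (q.1 : ℕ) : ℕ) : ℝ)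

/-- The content of a semistandard Young tableau: `content μ T k` is the number
of cells of `μ` whose entry equals `k`. -/
def ssytContent (μ : YoungDiagram) (T : SemistandardYoungTableau μ) (k : ℕ) : ℕ :=
  (μ.cells.filter (fun c => T c.1 c.2 = k)).card

/-! ### Auxiliary lemmas -/

section AuxStmt17
set_option maxHeartbeats 2000000

lemma prodLower (n : ℕ) (hn : 2 ≤ n) (lam : Fin n → ℕ)
    (hmono : ∀ i j : Fin n, i ≤ j → lam j ≤ lam i)
    (hlast : lam ⟨n-1, Nat.sub_lt (lt_of_lt_of_le two_pos hn) one_pos⟩ = 0) :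
    (lam ⟨0, by omega⟩ + (n-1))^(n-1) ≤ 2^(n-2) *
      ∏ q ∈ univ.filter (fun q : Fin n × Fin n => q.1 < q.2),
        ((lam q.1 - lam q.2) + ((q.2:ℕ) - (q.1:ℕ))) := by
  set z : Fin n := ⟨0, by omega⟩ with hz
  set lst : Fin n := ⟨n-1, Nat.sub_lt (lt_of_lt_of_le two_pos hn) one_pos⟩ with hlst
  set F : Fin n × Fin n → ℕ := fun q => (lam q.1 - lam q.2) + ((q.2:ℕ) - (q.1:ℕ)) with hF
  set M := lam z + (n-1) with hM
  set P : Finset (Fin n × Fin n) := univ.filter (fun q => q.1 < q.2) with hP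
  have hzl : z < lst := by simp only [hz, hlst, Fin.lt_def]; omega
  set B1 : Finset (Fin n × Fin n) := (Ioi z).image (fun j => (z, j)) with hB1
  set B2 : Finset (Fin n × Fin n) := (Ioo z lst).image (fun j => (j, lst)) with hB2
  have hdisj : Disjoint B1 B2 := by
    rw [Finset.disjoint_left]
    rintro ⟨a, b⟩ h1 h2
    simp only [hB1, hB2, mem_image, mem_Ioi, mem_Ioo, Prod.mk.injEq] at h1 h2
    obtain ⟨j, hj, rfl, rfl⟩ := h1
    obtain ⟨j', ⟨hj1, hj2⟩, rfl, rfl⟩ := h2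
    exact absurd hj1 (lt_irrefl z)
  have hsub : B1 ∪ B2 ⊆ P := by
    intro q hq
    simp only [hB1, hB2, mem_union, mem_image, mem_Ioi, mem_Ioo] at hq
    simp only [hP, mem_filter, mem_univ, true_and]
    rcases hq with ⟨j, hj, rfl⟩ | ⟨j, hj, rfl⟩
    · exact hj
    · exact hj.2
  have hone : ∀ q ∈ P, 1 ≤ F q := by
    intro q hq
    simp only [hP, mem_filter, mem_univ, true_and] at hq
    have : (q.1 : ℕ) < q.2 := hq
    simp only [hF]; omega
  have step1 : ∏ q ∈ B1 ∪ B2, F q ≤ ∏ q ∈ P, F q := by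
    apply Finset.prod_le_prod_of_subset_of_one_le' hsub
    intro q hq _; exact hone q hq
  have hinj1 : Set.InjOn (fun j => ((z, j) : Fin n × Fin n)) (Ioi z) := by
    intro a _ b _ h; simpa using h
  have hinj2 : Set.InjOn (fun j => ((j, lst) : Fin n × Fin n)) (Ioo z lst) := by
    intro a _ b _ h; simpa using h
  have hsplit : Ioi z = insert lst (Ioo z lst) := by
    ext j
    simp only [mem_Ioi, mem_insert, mem_Ioo, Fin.lt_def, hz, hlst]
    have := j.isLt
    constructor
    · intro h
      rcases eq_or_lt_of_le (show (j:ℕ) ≤ n-1 by omega) with h' | h'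
      · left; exact Fin.ext h'
      · right; exact ⟨h, h'⟩
    · rintro (rfl | ⟨h1, h2⟩)
      · omega
      · exact h1
  have hlstnot : lst ∉ Ioo z lst := by simp
  have step2 : ∏ q ∈ B1 ∪ B2, F q
      = M * ∏ j ∈ Ioo z lst, (F (z, j) * F (j, lst)) := by
    rw [Finset.prod_union hdisj, Finset.prod_image hinj1, Finset.prod_image hinj2,
      hsplit, Finset.prod_insert hlstnot]
    have : F (z, lst) = M := by
      simp only [hF, hM, hz, hlst]
      rw [hlast]
      omega
    rw [this, mul_assoc, ← Finset.prod_mul_distrib]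
  have hcard : (Ioo z lst).card = n - 2 := by
    rw [Fin.card_Ioo]; simp [hz, hlst]; omega
  have step3 : M ^ (n-2) ≤ ∏ j ∈ Ioo z lst, (2 * (F (z, j) * F (j, lst))) := by
    calc M ^ (n-2) = ∏ _j ∈ Ioo z lst, M := by rw [Finset.prod_const, hcard]
    _ ≤ _ := by
        apply Finset.prod_le_prod
        · intro j _; exact Nat.zero_le _
        · intro j hj
          simp only [mem_Ioo, Fin.lt_def, hz, hlst] at hj
          have h1 : lam j ≤ lam z := hmono z j (by simp [Fin.le_def, hz])
          have h2 : lam lst ≤ lam j := hmono j lst (by simp [Fin.le_def, hlst]; omega)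
          have ha : F (z, j) = lam z - lam j + (j : ℕ) := by simp [hF, hz]
          have hb : F (j, lst) = lam j + (n - 1 - (j:ℕ)) := by
            simp only [hF]; rw [hlast]; simp [hlst]
          have hsum : F (z, j) + F (j, lst) = M := by
            rw [ha, hb, hM]; omega
          have h1' : 1 ≤ F (z, j) := by rw [ha]; omega
          have h2' : 1 ≤ F (j, lst) := by rw [hb]; omega
          nlinarith [h1', h2', hsum.ge, hsum.le]
  have step4 : ∏ j ∈ Ioo z lst, (2 * (F (z, j) * F (j, lst)))
      = 2^(n-2) * ∏ j ∈ Ioo z lst, (F (z, j) * F (j, lst)) := by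
    rw [Finset.prod_mul_distrib, Finset.prod_const, hcard]
  calc M ^ (n-1) = M ^ (n-2) * M := by
        rw [← pow_succ]; congr 1; omega
  _ ≤ (2^(n-2) * ∏ j ∈ Ioo z lst, (F (z, j) * F (j, lst))) * M := by
        apply Nat.mul_le_mul_right; rw [← step4]; exact step3
  _ = 2^(n-2) * (M * ∏ j ∈ Ioo z lst, (F (z, j) * F (j, lst))) := by ring
  _ = 2^(n-2) * ∏ q ∈ B1 ∪ B2, F q := by rw [step2]
  _ ≤ 2^(n-2) * ∏ q ∈ P, F q := Nat.mul_le_mul_left _ step1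

lemma suDim_eq (n : ℕ) (lam : Fin n → ℕ)
    (hmono : ∀ i j : Fin n, i ≤ j → lam j ≤ lam i) :
    suDim n lam =
      ((∏ q ∈ univ.filter (fun q : Fin n × Fin n => q.1 < q.2),
          ((lam q.1 - lam q.2) + ((q.2:ℕ) - (q.1:ℕ))) : ℕ) : ℝ) /
      ((∏ q ∈ univ.filter (fun q : Fin n × Fin n => q.1 < q.2),
          ((q.2:ℕ) - (q.1:ℕ)) : ℕ) : ℝ) := by
  rw [suDim, Nat.cast_prod, Nat.cast_prod, ← Finset.prod_div_distrib]
  apply Finset.prod_congr rfl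
  intro q hq
  simp only [mem_filter, mem_univ, true_and] at hq
  have h1 : lam q.2 ≤ lam q.1 := hmono q.1 q.2 (le_of_lt hq)
  have h2 : (q.1:ℕ) ≤ (q.2:ℕ) := le_of_lt hq
  congr 1
  have : ((lam q.1 : ℤ) - (lam q.2 : ℤ) + ((q.2 : ℕ) : ℤ) - ((q.1 : ℕ) : ℤ))
      = (((lam q.1 - lam q.2) + ((q.2:ℕ) - (q.1:ℕ)) : ℕ) : ℤ) := by omega
  rw [this]
  push_cast
  ring

def Sw (t : ℕ → ℕ) (k : ℕ) : ℕ := ∑ i ∈ Finset.range k, t i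

lemma Sw_mono (t : ℕ → ℕ) {k l : ℕ} (h : k ≤ l) : Sw t k ≤ Sw t l :=
  Finset.sum_le_sum_of_subset (Finset.range_subset_range.2 h)

def fw (t : ℕ → ℕ) (n : ℕ) (j : ℕ) : ℕ := Nat.findGreatest (fun k => Sw t k ≤ j) (n-1)

lemma fw_lt (t : ℕ → ℕ) {n : ℕ} (hn : 1 ≤ n) (j : ℕ) : fw t n j < n :=
  lt_of_le_of_lt (Nat.findGreatest_le _) (by omega)

lemma fw_mono (t : ℕ → ℕ) (n : ℕ) {j j' : ℕ} (h : j ≤ j') : fw t n j ≤ fw t n j' :=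
  Nat.findGreatest_mono_left (fun k hk => le_trans hk h) _

lemma fw_eq_iff (t : ℕ → ℕ) {n : ℕ} (hn : 1 ≤ n) {j k : ℕ} (hj : j < Sw t n) (hk : k < n) :
    fw t n j = k ↔ Sw t k ≤ j ∧ j < Sw t (k+1) := by
  have hspec : Sw t (fw t n j) ≤ j :=
    Nat.findGreatest_spec (P := fun k => Sw t k ≤ j) (Nat.zero_le (n-1)) (by simp [Sw])
  have hspec2 : j < Sw t (fw t n j + 1) := by
    by_cases h : fw t n j = n - 1
    · rw [h]
      have : n - 1 + 1 = n := by omega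
      rw [this]; exact hj
    · have hfw : fw t n j = Nat.findGreatest (fun k => Sw t k ≤ j) (n-1) := rfl
      have hle : fw t n j ≤ n - 1 := by rw [hfw]; exact Nat.findGreatest_le _
      have hlt : fw t n j + 1 ≤ n - 1 := by omega
      have hg := Nat.findGreatest_is_greatest (P := fun k => Sw t k ≤ j)
        (n := n-1) (k := fw t n j + 1) (by rw [← hfw]; omega) hlt
      have hg' : ¬ Sw t (fw t n j + 1) ≤ j := hg
      omega
  constructor
  · rintro rfl; exact ⟨hspec, hspec2⟩
  · rintro ⟨h1, h2⟩
    have hk1 : k ≤ fw t n j := Nat.le_findGreatest (by omega) h1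
    have hk2 : fw t n j ≤ k := by
      by_contra h
      push_neg at h
      exact absurd (le_trans (Sw_mono t (by omega : k + 1 ≤ fw t n j)) hspec) (by omega)
    omega

lemma fw_count (t : ℕ → ℕ) {n : ℕ} (hn : 1 ≤ n) {k : ℕ} (hk : k < n) :
    ((Finset.range (Sw t n)).filter (fun j => fw t n j = k)).card = t k := by
  have heq : (Finset.range (Sw t n)).filter (fun j => fw t n j = k)
      = Finset.Ico (Sw t k) (Sw t (k+1)) := by
    ext j
    simp only [Finset.mem_filter, Finset.mem_range, Finset.mem_Ico]
    constructor
    · rintro ⟨hj, hf⟩; exact (fw_eq_iff t hn hj hk).1 hf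
    · intro h
      have hj : j < Sw t n := lt_of_lt_of_le h.2 (Sw_mono t (by omega : k+1 ≤ n))
      exact ⟨hj, (fw_eq_iff t hn hj hk).2 h⟩
  rw [heq, Nat.card_Ico]
  simp [Sw, Finset.sum_range_succ]

def lamOf (n : ℕ) (t : ℕ → ℕ) : Fin n → ℕ := fun i => if (i:ℕ) = 0 then Sw t n else 0

lemma lamOf_mono (n : ℕ) (t : ℕ → ℕ) : ∀ i j : Fin n, i ≤ j → lamOf n t j ≤ lamOf n t i := by
  intro i j hij
  simp only [lamOf]
  have : (i:ℕ) ≤ (j:ℕ) := hij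
  split_ifs with h1 h2 h2 <;> omega

lemma lamOf_sorted (n : ℕ) (t : ℕ → ℕ) : (List.ofFn (lamOf n t)).SortedGE := by
  rw [List.sortedGE_ofFn_iff]
  intro i j hij
  exact lamOf_mono n t i j hij

lemma lamOf_sum (n : ℕ) (hn : 1 ≤ n) (t : ℕ → ℕ) : ∑ i, lamOf n t i = Sw t n := by
  rw [Finset.sum_eq_single ⟨0, by omega⟩]
  · simp [lamOf]
  · intro b _ hb
    have : (b:ℕ) ≠ 0 := by
      intro h; exact hb (Fin.ext h)
    simp [lamOf, this]
  · simp

lemma witness_mem (n : ℕ) (hn : 2 ≤ n) (t : ℕ → ℕ) :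
    ∃ (T : SemistandardYoungTableau
        (YoungDiagram.ofRowLens (List.ofFn (lamOf n t)) (lamOf_sorted n t))),
      (∀ c ∈ (YoungDiagram.ofRowLens (List.ofFn (lamOf n t)) (lamOf_sorted n t)).cells,
        T c.1 c.2 < n) ∧
      (∀ k, k < n → ssytContent _ T k = t k) := by
  set m := Sw t n with hm
  set μ := YoungDiagram.ofRowLens (List.ofFn (lamOf n t)) (lamOf_sorted n t) with hμ
  have hmem : ∀ i j : ℕ, ((i, j) ∈ μ) ↔ (i = 0 ∧ j < m) := by
    intro i j
    rw [hμ, YoungDiagram.mem_ofRowLens]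
    simp only [List.length_ofFn, List.getElem_ofFn]
    constructor
    · rintro ⟨h, hj⟩
      simp only [lamOf] at hj
      split_ifs at hj with h0
      · exact ⟨h0, hj⟩
      · omega
    · rintro ⟨rfl, hj⟩
      exact ⟨by omega, by simp [lamOf]; exact hj⟩
  set ent : ℕ → ℕ → ℕ := fun i j => if i = 0 ∧ j < m then fw t n j else 0 with hent
  refine ⟨⟨ent, ?_, ?_, ?_⟩, ?_, ?_⟩
  · -- row_weak
    intro i j1 j2 hj hcell
    rw [hmem] at hcell
    obtain ⟨rfl, hj2⟩ := hcell
    simp only [hent]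
    rw [if_pos ⟨trivial, by omega⟩, if_pos ⟨trivial, hj2⟩]
    exact fw_mono t n (le_of_lt hj)
  · -- col_strict
    intro i1 i2 j hi hcell
    rw [hmem] at hcell
    omega
  · -- zeros
    intro i j hcell
    rw [hmem] at hcell
    simp only [hent]
    rw [if_neg hcell]
  · -- entries < n
    intro c hc
    rw [YoungDiagram.mem_cells] at hc
    show ent c.1 c.2 < n
    simp only [hent]
    split_ifs with h
    · exact fw_lt t (by omega) _
    · omega
  · -- content
    intro k hk
    show ((μ.cells.filter (fun c => ent c.1 c.2 = k)).card) = t k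
    simp only [hent]
    have himg : μ.cells.filter (fun c => (if c.1 = 0 ∧ c.2 < m then fw t n c.2 else 0) = k)
        = ((Finset.range m).filter (fun j => fw t n j = k)).image (fun j => (0, j)) := by
      ext c
      obtain ⟨i, j⟩ := c
      simp only [Finset.mem_filter, YoungDiagram.mem_cells, Finset.mem_image,
        Finset.mem_range, hmem, Prod.mk.injEq]
      constructor
      · rintro ⟨⟨rfl, hj⟩, hT⟩
        rw [if_pos ⟨rfl, hj⟩] at hT
        exact ⟨j, ⟨hj, hT⟩, rfl, rfl⟩
      · rintro ⟨j', ⟨hj', hT⟩, rfl, rfl⟩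
        exact ⟨⟨rfl, hj'⟩, by rw [if_pos ⟨rfl, hj'⟩]; exact hT⟩
    rw [himg, Finset.card_image_of_injective _ (fun a b h => by simpa using h)]
    exact fw_count t (by omega) hk

lemma prod_Ioi_val (n : ℕ) (hn : 2 ≤ n) :
    ∏ j ∈ Ioi (⟨0, by omega⟩ : Fin n), ((j:ℕ):ℝ) = ((n-1).factorial : ℝ) := by
  rw [← Nat.cast_prod]
  congr 1
  have himg : (Ioi (⟨0, by omega⟩ : Fin n)).image (Fin.val) = Finset.Ico 1 n := by
    ext k
    simp only [Finset.mem_image, mem_Ioi, Fin.lt_def, Finset.mem_Ico]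
    constructor
    · rintro ⟨j, hj, rfl⟩
      exact ⟨by omega, j.isLt⟩
    · rintro ⟨h1, h2⟩
      refine ⟨⟨k, h2⟩, ?_, ?_⟩ <;> simp <;> omega
  have := Finset.prod_image (f := fun k : ℕ => k) (g := Fin.val)
    (s := Ioi (⟨0, by omega⟩ : Fin n)) (fun a _ b _ h => Fin.ext h)
  rw [himg] at this
  rw [← this]
  rw [show (n-1).factorial = ∏ x ∈ Finset.Ico 1 ((n-1)+1), x from
    (Finset.prod_Ico_id_eq_factorial _).symm]
  rw [show (n-1)+1 = n by omega]

lemma suDim_one_row_le (n : ℕ) (hn : 2 ≤ n) (t : ℕ → ℕ) (K : ℝ)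
    (hmK : (Sw t n : ℝ) + ((n:ℝ) - 1) ≤ K) (hK0 : 0 ≤ K) :
    suDim n (lamOf n t) ≤ K^(n-1) / ((n-1).factorial : ℝ) := by
  set z : Fin n := ⟨0, by omega⟩ with hz
  set P := univ.filter (fun q : Fin n × Fin n => q.1 < q.2) with hP
  set g : Fin n × Fin n → ℝ :=
    fun q => if (q.1:ℕ) = 0 then K / (((q.2:ℕ) - (q.1:ℕ) : ℕ) : ℝ) else 1 with hg
  have hstep : suDim n (lamOf n t) ≤ ∏ q ∈ P, g q := by
    rw [suDim]
    apply Finset.prod_le_prod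
    · intro q hq
      simp only [hP, mem_filter, mem_univ, true_and] at hq
      have h1 : lamOf n t q.2 ≤ lamOf n t q.1 := lamOf_mono n t q.1 q.2 (le_of_lt hq)
      have h2 : (q.1:ℕ) < (q.2:ℕ) := hq
      apply div_nonneg
      · exact_mod_cast
          (by omega : (0:ℤ) ≤ (lamOf n t q.1 : ℤ) - lamOf n t q.2 + (q.2:ℕ) - (q.1:ℕ))
      · positivity
    · intro q hq
      simp only [hP, mem_filter, mem_univ, true_and] at hq
      have h2 : (q.1:ℕ) < (q.2:ℕ) := hq
      have hden : (0:ℝ) < (((q.2:ℕ) - (q.1:ℕ) : ℕ) : ℝ) := by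
        have : 0 < (q.2:ℕ) - (q.1:ℕ) := by omega
        exact_mod_cast this
      by_cases h0 : (q.1:ℕ) = 0
      · simp only [hg, if_pos h0]
        have e1 : lamOf n t q.1 = Sw t n := if_pos h0
        have e2 : lamOf n t q.2 = 0 := if_neg (by omega)
        rw [e1, e2]
        gcongr
        have hq2 : (q.2:ℕ) ≤ n - 1 := by omega
        have hq2' : ((q.2:ℕ) : ℝ) ≤ (n:ℝ) - 1 := by
          have : ((q.2:ℕ) : ℝ) ≤ ((n-1 : ℕ) : ℝ) := by exact_mod_cast hq2
          rw [Nat.cast_sub (by omega)] at this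
          simpa using this
        push_cast
        rw [h0]
        push_cast
        linarith
      · simp only [hg, if_neg h0]
        have e1 : lamOf n t q.1 = 0 := if_neg h0
        have e2 : lamOf n t q.2 = 0 := if_neg (by omega)
        rw [e1, e2]
        have hnum : (((0:ℕ) : ℤ) - ((0:ℕ):ℤ) + ((q.2:ℕ):ℤ) - ((q.1:ℕ):ℤ))
            = (((q.2:ℕ) - (q.1:ℕ) : ℕ) : ℤ) := by omega
        rw [show ((((0:ℕ) : ℤ) - ((0:ℕ):ℤ) + ((q.2:ℕ):ℤ) - ((q.1:ℕ):ℤ) : ℤ) : ℝ)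
            = (((q.2:ℕ) - (q.1:ℕ) : ℕ) : ℝ) by rw [hnum]; push_cast; ring]
        rw [div_self (ne_of_gt hden)]
  have hsplit : ∏ q ∈ P, g q = K^(n-1) / ((n-1).factorial : ℝ) := by
    rw [← Finset.prod_filter_mul_prod_filter_not P (fun q => (q.1:ℕ) = 0)]
    have h2 : ∏ q ∈ P.filter (fun q => ¬ (q.1:ℕ) = 0), g q = 1 :=
      Finset.prod_eq_one (fun q hq => by
        simp only [hg]; rw [if_neg (Finset.mem_filter.1 hq).2])
    rw [h2, mul_one]
    have h1 : P.filter (fun q => (q.1:ℕ) = 0) = (Ioi z).image (fun j => (z, j)) := by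
      ext q
      obtain ⟨a, b⟩ := q
      simp only [hP, mem_filter, mem_univ, true_and, mem_image, mem_Ioi, Prod.mk.injEq]
      constructor
      · rintro ⟨hab, ha⟩
        have haz : a = z := Fin.ext (by simpa [hz] using ha)
        exact ⟨b, by rw [← haz]; exact hab, haz.symm, rfl⟩
      · rintro ⟨j, hj, rfl, rfl⟩
        exact ⟨hj, by simp [hz]⟩
    rw [h1, Finset.prod_image (by intro a _ b _ h; simpa using h)]
    have hcongr : ∀ j ∈ Ioi z, g (z, j) = K / (((j:ℕ) : ℕ) : ℝ) := by
      intro j hj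
      simp only [hg, hz]
      simp
    rw [Finset.prod_congr rfl hcongr, Finset.prod_div_distrib, Finset.prod_const,
      Fin.card_Ioi]
    have : (n - 1 - ((z:ℕ))) = n - 1 := by simp [hz]
    rw [this]
    congr 1
    exact prod_Ioi_val n hn
  linarith [hsplit ▸ hstep]

end AuxStmt17

set_option maxHeartbeats 2000000

/-- The restriction of the dimension weight `ω₁(π) = d_π` on `SU(n)` to the
maximal torus `ℤ^{n-1}` is equivalent to the polynomial weight
`(1 + ‖p‖₁)^{n-1}`: for every nonincreasing `p ∈ ℤ^{n-1}`,
`c_n(∑|pᵢ|+1)^{n-1} ≤ inf{ d_λ : λ dominant with a semistandard tableau of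
shape λ, entries in n letters, and content realizing `p` } ≤ d_n(∑|pᵢ|+1)^{n-1}`
with `c_n = 1/(n^{2(n-1)} 2^{n-2} ∏_{i<j}(j-i))` and `d_n = (n+1)^{n-1}/(n-1)!`. -/
theorem stmt_17 (n : ℕ) (hn : 2 ≤ n) (p : Fin (n - 1) → ℤ)
    (hp : ∀ i j : Fin (n - 1), i ≤ j → p j ≤ p i)
    (D : Set ℝ)
    (hD : D = { x : ℝ | ∃ lam : Fin n → ℕ,
      (∀ i j : Fin n, i ≤ j → lam j ≤ lam i) ∧ lam ⟨n - 1, by omega⟩ = 0 ∧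
      (∃ (hs : (List.ofFn lam).SortedGE)
         (T : SemistandardYoungTableau (YoungDiagram.ofRowLens (List.ofFn lam) hs)),
        (∀ c ∈ (YoungDiagram.ofRowLens (List.ofFn lam) hs).cells, T c.1 c.2 < n) ∧
        (∑ k ∈ Finset.range n,
            ssytContent (YoungDiagram.ofRowLens (List.ofFn lam) hs) T k) =
          ∑ i, lam i ∧
        (∀ i : Fin (n - 1),
          (ssytContent (YoungDiagram.ofRowLens (List.ofFn lam) hs) T (i : ℕ) : ℤ) -
            (ssytContent (YoungDiagram.ofRowLens (List.ofFn lam) hs) T (n - 1) : ℤ) =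
            p i)) ∧
      x = suDim n lam }) :
    (1 / ((n : ℝ) ^ (2 * (n - 1)) * 2 ^ (n - 2) *
        ∏ q ∈ univ.filter (fun q : Fin n × Fin n => q.1 < q.2),
          (((q.2 : ℕ) - (q.1 : ℕ) : ℕ) : ℝ))) *
        ((∑ i, |(p i : ℝ)|) + 1) ^ (n - 1) ≤ sInf D ∧
    sInf D ≤ ((n : ℝ) + 1) ^ (n - 1) / (Nat.factorial (n - 1)) *
        ((∑ i, |(p i : ℝ)|) + 1) ^ (n - 1) := by
  classical
  have hn1 : 1 ≤ n := by omega
  have hnR : (2:ℝ) ≤ (n:ℝ) := by exact_mod_cast hn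
  set z : Fin n := ⟨0, by omega⟩ with hz
  set S : ℝ := ∑ i, |(p i : ℝ)| with hSdef
  have hS0 : 0 ≤ S := Finset.sum_nonneg fun i _ => abs_nonneg _
  set B : ℝ := ∏ q ∈ univ.filter (fun q : Fin n × Fin n => q.1 < q.2),
      (((q.2 : ℕ) - (q.1 : ℕ) : ℕ) : ℝ) with hBdef
  have hBpos : 0 < B := by
    apply Finset.prod_pos
    intro q hq
    simp only [mem_filter, mem_univ, true_and] at hq
    have : (q.1:ℕ) < (q.2:ℕ) := hq
    have : 0 < (q.2:ℕ) - (q.1:ℕ) := by omega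
    exact_mod_cast this
  have hBalt : B = ((∏ q ∈ univ.filter (fun q : Fin n × Fin n => q.1 < q.2),
      ((q.2:ℕ) - (q.1:ℕ)) : ℕ) : ℝ) := by rw [hBdef, Nat.cast_prod]
  -- Lower bound, pointwise
  have hlow : ∀ x ∈ D,
      (1 / ((n : ℝ) ^ (2 * (n - 1)) * 2 ^ (n - 2) * B)) * (S + 1) ^ (n - 1) ≤ x := by
    rw [hD]
    rintro x ⟨lam, hmono, hlast, ⟨hs, T, hTlt, hTsum, hTp⟩, rfl⟩
    have htle : ∀ k, k < n →
        ssytContent (YoungDiagram.ofRowLens (List.ofFn lam) hs) T k ≤ ∑ i, lam i := by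
      intro k hk
      rw [← hTsum]
      exact Finset.single_le_sum (fun _ _ => Nat.zero_le _) (Finset.mem_range.2 hk)
    have hlam0 : ∑ i, lam i ≤ n * lam z := by
      calc ∑ i, lam i ≤ (univ : Finset (Fin n)).card • lam z := by
            apply Finset.sum_le_card_nsmul
            intro i _
            exact hmono z i (by simp [hz, Fin.le_def])
      _ = n * lam z := by simp [smul_eq_mul]
    have hpabs : ∀ i : Fin (n-1), |(p i : ℝ)| ≤ ((n * lam z : ℕ) : ℝ) := by
      intro i
      have h1 := le_trans (htle (i:ℕ) (by omega)) hlam0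
      have h2 := le_trans (htle (n-1) (by omega)) hlam0
      have habs : |p i| ≤ ((n * lam z : ℕ) : ℤ) := by
        rw [← hTp i, abs_le]
        omega
      calc |(p i : ℝ)| = ((|p i| : ℤ) : ℝ) := Int.cast_abs.symm
      _ ≤ _ := by exact_mod_cast habs
    have hM : S + 1 ≤ (n:ℝ)^2 * ((lam z + (n-1) : ℕ) : ℝ) := by
      have hsum : S ≤ ((univ : Finset (Fin (n-1))).card) • ((n * lam z : ℕ) : ℝ) :=
        Finset.sum_le_card_nsmul _ _ _ (fun i _ => hpabs i)
      have hcard : ((univ : Finset (Fin (n-1))).card) = n - 1 := by simp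
      rw [hcard, nsmul_eq_mul] at hsum
      have hc1 : ((n - 1 : ℕ) : ℝ) = (n:ℝ) - 1 := by
        rw [Nat.cast_sub hn1]; simp
      have hc2 : ((n * lam z : ℕ) : ℝ) = (n:ℝ) * (lam z : ℕ) := by push_cast; ring
      have hc3 : ((lam z + (n-1) : ℕ) : ℝ) = ((lam z : ℕ) : ℝ) + ((n:ℝ) - 1) := by
        push_cast [Nat.cast_sub hn1]; ring
      rw [hc1, hc2] at hsum
      rw [hc3]
      have hl0 : (0:ℝ) ≤ ((lam z : ℕ) : ℝ) := Nat.cast_nonneg _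
      nlinarith [hsum, hl0, hnR]
    have hkey := prodLower n hn lam hmono hlast
    have hsu := suDim_eq n lam hmono
    set N : ℕ := ∏ q ∈ univ.filter (fun q : Fin n × Fin n => q.1 < q.2),
        ((lam q.1 - lam q.2) + ((q.2:ℕ) - (q.1:ℕ))) with hNdef
    have hX : (S+1)^(n-1) ≤ (n:ℝ)^(2*(n-1)) * (2^(n-2) * N) := by
      calc (S+1)^(n-1) ≤ ((n:ℝ)^2 * ((lam z + (n-1) : ℕ) : ℝ))^(n-1) := by
            apply pow_le_pow_left₀ (by positivity) hM
      _ = (n:ℝ)^(2*(n-1)) * (((lam z + (n-1) : ℕ) : ℝ))^(n-1) := by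
            rw [mul_pow, ← pow_mul]
      _ ≤ (n:ℝ)^(2*(n-1)) * (2^(n-2) * N) := by
            apply mul_le_mul_of_nonneg_left _ (by positivity)
            calc (((lam z + (n-1) : ℕ) : ℝ))^(n-1)
                = (((lam z + (n-1))^(n-1) : ℕ) : ℝ) := by push_cast; ring
            _ ≤ ((2^(n-2) * N : ℕ) : ℝ) := by
                exact_mod_cast hkey
            _ = 2^(n-2) * N := by push_cast; ring
    rw [hsu, ← hBalt]
    rw [div_mul_eq_mul_div, one_mul, div_le_div_iff₀ (by positivity) hBpos]
    calc (S+1)^(n-1) * B ≤ ((n:ℝ)^(2*(n-1)) * (2^(n-2) * (N:ℝ))) * B :=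
          mul_le_mul_of_nonneg_right hX (le_of_lt hBpos)
    _ = (N:ℝ) * ((n:ℝ)^(2*(n-1)) * 2^(n-2) * B) := by ring
  -- Witness for upper bound
  set lst' : Fin (n-1) := ⟨n-2, by omega⟩ with hlst'
  set s : ℕ := (-(p lst')).toNat with hsdef
  set t : ℕ → ℕ := fun k =>
    if h : k < n - 1 then (p ⟨k, h⟩ + (s:ℤ)).toNat else if k = n - 1 then s else 0 with htdef
  have hsge : ∀ i : Fin (n-1), (0:ℤ) ≤ p i + (s:ℤ) := by
    intro i
    have h1 : p lst' ≤ p i := hp i lst' (by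
      rw [Fin.le_def]
      simp only [hlst']
      omega)
    have h2 : -(p lst') ≤ (s:ℤ) := Int.self_le_toNat _
    omega
  have htval : ∀ i : Fin (n-1), (t (i:ℕ) : ℤ) = p i + (s:ℤ) := by
    intro i
    simp only [htdef]
    rw [dif_pos i.isLt, Int.toNat_of_nonneg (by simpa using hsge ⟨(i:ℕ), i.isLt⟩)]
  have htlast : t (n-1) = s := by
    simp [htdef]
  have hlast0 : lamOf n t ⟨n - 1, by omega⟩ = 0 := by
    simp only [lamOf]
    split_ifs with h
    · exfalso
      have h' : n - 1 = 0 := h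
      omega
    · rfl
  obtain ⟨T, hTlt, hTc⟩ := witness_mem n hn t
  have hmem : suDim n (lamOf n t) ∈ D := by
    rw [hD]
    refine ⟨lamOf n t, lamOf_mono n t, hlast0, ⟨lamOf_sorted n t, T, hTlt, ?_, ?_⟩, rfl⟩
    · rw [Finset.sum_congr rfl (fun k hk => hTc k (Finset.mem_range.1 hk)),
        lamOf_sum n hn1 t]
      rfl
    · intro i
      rw [hTc (i:ℕ) (by omega), hTc (n-1) (by omega), htlast]
      have := htval i
      omega
  -- Bound on the witness
  have hsS : (s:ℤ) ≤ ∑ i, |p i| := by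
    have h1 : (s:ℤ) ≤ |p lst'| := by
      rw [hsdef, Int.toNat_eq_max]
      exact max_le (neg_le_abs _) (abs_nonneg _)
    exact le_trans h1 (Finset.single_le_sum (fun i _ => abs_nonneg (p i)) (mem_univ lst'))
  have hsumpS : (∑ i, p i : ℤ) ≤ ∑ i, |p i| :=
    Finset.sum_le_sum fun i _ => le_abs_self _
  have hSz : S = ((∑ i, |p i| : ℤ) : ℝ) := by
    rw [hSdef]
    push_cast
    rfl
  have hmz : (Sw t n : ℤ) = (∑ i, p i) + (n:ℤ) * s := by
    have h1 : ∑ k ∈ Finset.range n, t k = (∑ k ∈ Finset.range (n-1), t k) + t (n-1) := by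
      rw [← Finset.sum_range_succ, show n-1+1 = n by omega]
    have h2 : (∑ k ∈ Finset.range (n-1), (t k : ℤ)) = ∑ i : Fin (n-1), (t (i:ℕ) : ℤ) :=
      (Fin.sum_univ_eq_sum_range _ _).symm
    have h3 : (∑ i : Fin (n-1), (t (i:ℕ) : ℤ)) = (∑ i, p i) + ((n:ℤ) - 1) * s := by
      rw [Finset.sum_congr rfl (fun i _ => htval i), Finset.sum_add_distrib,
        Finset.sum_const]
      have : ((univ : Finset (Fin (n-1))).card) = n - 1 := by simp
      rw [this, nsmul_eq_mul]
      have : ((n - 1 : ℕ) : ℤ) = (n:ℤ) - 1 := by omega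
      rw [this]
    have h4 : (Sw t n : ℤ) = (∑ k ∈ Finset.range (n-1), (t k : ℤ)) + (t (n-1) : ℤ) := by
      rw [show (Sw t n : ℤ) = ((∑ k ∈ Finset.range n, t k : ℕ) : ℤ) from rfl, h1]
      push_cast
      ring
    rw [h4, h2, h3, htlast]
    ring
  have hmS : (Sw t n : ℝ) ≤ ((n:ℝ) + 1) * S := by
    have h5 : (Sw t n : ℤ) ≤ ((n:ℤ) + 1) * (∑ i, |p i|) := by
      rw [hmz]
      have hs0 : (0:ℤ) ≤ (s:ℤ) := by positivity
      nlinarith [hsS, hsumpS, (by exact_mod_cast hn : (2:ℤ) ≤ (n:ℤ)),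
        Finset.sum_nonneg (fun i (_ : i ∈ (univ : Finset (Fin (n-1)))) => abs_nonneg (p i))]
    calc (Sw t n : ℝ) = (((Sw t n : ℤ)) : ℝ) := by push_cast; rfl
    _ ≤ ((((n:ℤ) + 1) * (∑ i, |p i|) : ℤ) : ℝ) := by exact_mod_cast h5
    _ = ((n:ℝ) + 1) * S := by rw [hSz]; push_cast; ring
  set K : ℝ := ((n:ℝ) + 1) * (S + 1) with hKdef
  have hwit_le : suDim n (lamOf n t) ≤ K^(n-1) / ((n-1).factorial : ℝ) := by
    apply suDim_one_row_le n hn t K _ (by positivity)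
    calc (Sw t n : ℝ) + ((n:ℝ) - 1) ≤ ((n:ℝ) + 1) * S + ((n:ℝ) + 1) := by
          linarith [hmS]
    _ = K := by rw [hKdef]; ring
  have hne : D.Nonempty := ⟨_, hmem⟩
  have hbdd : BddBelow D := ⟨_, fun x hx => hlow x hx⟩
  constructor
  · exact le_csInf hne hlow
  · calc sInf D ≤ suDim n (lamOf n t) := csInf_le hbdd hmem
    _ ≤ K^(n-1) / ((n-1).factorial : ℝ) := hwit_le
    _ = ((n : ℝ) + 1) ^ (n - 1) / (Nat.factorial (n - 1)) * (S + 1) ^ (n - 1) := by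
        rw [hKdef, mul_pow]
        ring
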